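/- Let V be an algebra of differential functions extending the algebra of differential polynomials R_ℓ over a differential field F of quasiconstants. If K(∂) is an ℓ×ℓ matrix differential operator with quasiconstant coefficients, order N, and invertible leading coefficient K_N ∈ Mat_{ℓ×ℓ}(F), then every solution F ∈ V^ℓ of K(∂)F = 0 has all components in F, i.e., ker(K(∂): V^ℓ → V^ℓ) = ker(K(∂)|_{F^ℓ}). -/

import Mathlib

/-- An algebra of differential functions in `ℓ` variables `u_1,…,u_ℓ`: a commutative
differential algebra `(V, d)` with commuting derivations `pd i n = ∂/∂u_i^{(n)}`, each
element depending on finitely many variables, satisfying the commutation rules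
`[∂/∂u_i^{(n)}, ∂] = ∂/∂u_i^{(n−1)}`, and containing the differential variables `u_i`
(so that `V` extends the algebra of differential polynomials `R_ℓ`). -/
structure ADF (ℓ : ℕ) (V : Type) [CommRing V] where
  d : V → V
  d_add : ∀ a b, d (a + b) = d a + d b
  d_mul : ∀ a b, d (a * b) = d a * b + a * d b
  pd : Fin ℓ → ℕ → V → V
  pd_add : ∀ i n a b, pd i n (a + b) = pd i n a + pd i n b
  pd_mul : ∀ i n a b, pd i n (a * b) = pd i n a * b + a * pd i n b
  pd_comm : ∀ i n j m f, pd i n (pd j m f) = pd j m (pd i n f)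
  finite_dep : ∀ f : V, ∃ M : ℕ, ∀ i n, M ≤ n → pd i n f = 0
  pd_d : ∀ i n f, pd i (n + 1) (d f) = d (pd i (n + 1) f) + pd i n f
  pd_d0 : ∀ i f, pd i 0 (d f) = d (pd i 0 f)
  u : Fin ℓ → V
  pd_u : ∀ i n j m, pd i n (d^[m] (u j)) = if i = j ∧ n = m then 1 else 0

/-- `f` is a quasiconstant: all the partial derivatives `∂f/∂u_i^{(n)}` vanish. -/
def ADF.quasi {ℓ : ℕ} {V : Type} [CommRing V] (A : ADF ℓ V) (f : V) : Prop :=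
  ∀ i n, A.pd i n f = 0

namespace ADF

variable {ℓ : ℕ} {V : Type} [CommRing V] (A : ADF ℓ V)

lemma d_zero : A.d 0 = 0 := by
  have h := A.d_add 0 0
  rw [add_zero] at h
  exact (right_eq_add.mp h)

lemma pd_zero (i : Fin ℓ) (n : ℕ) : A.pd i n 0 = 0 := by
  have h := A.pd_add i n 0 0
  rw [add_zero] at h
  exact (right_eq_add.mp h)

/-- `pd i n` as an additive monoid hom. -/
def pdHom (i : Fin ℓ) (n : ℕ) : V →+ V where
  toFun := A.pd i n
  map_zero' := A.pd_zero i n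
  map_add' := A.pd_add i n

@[simp] lemma pdHom_apply (i : Fin ℓ) (n : ℕ) (f : V) : A.pdHom i n f = A.pd i n f := rfl

lemma pd_iter_zero (i : Fin ℓ) (f : V) (M : ℕ)
    (h : ∀ m, M < m → A.pd i m f = 0) :
    ∀ n m, M + n < m → A.pd i m (A.d^[n] f) = 0 := by
  intro n
  induction n with
  | zero => intro m hm; exact h m (by simpa using hm)
  | succ n ih =>
    intro m hm
    obtain ⟨m', rfl⟩ : ∃ m', m = m' + 1 := ⟨m - 1, by omega⟩
    rw [Function.iterate_succ_apply', A.pd_d, ih m' (by omega), ih (m' + 1) (by omega),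
      A.d_zero, zero_add]

lemma pd_iter_top (i : Fin ℓ) (f : V) (M : ℕ)
    (h : ∀ m, M < m → A.pd i m f = 0) :
    ∀ n, A.pd i (M + n) (A.d^[n] f) = A.pd i M f := by
  intro n
  induction n with
  | zero => simp
  | succ n ih =>
    rw [Function.iterate_succ_apply', show M + (n + 1) = (M + n) + 1 from rfl, A.pd_d,
      A.pd_iter_zero i f M h n (M + n + 1) (by omega), A.d_zero, zero_add, ih]

end ADF

/-- let `V` be an algebra of differential functions extending `R_ℓ`
over a differential field `F` of quasiconstants.  If `K(∂)` is a quasiconstant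
ℓ×ℓ matrix differential operator of order `N` with invertible leading coefficient
`K_N ∈ Mat_{ℓ×ℓ}(F)`, then every solution `Fv ∈ V^ℓ` of `K(∂)Fv = 0` has all
components quasiconstant, i.e. `ker(K(∂):V^ℓ→V^ℓ) = ker(K(∂)|_{F^ℓ})`. -/
theorem stmt_10 {ℓ N : ℕ} {V : Type} [CommRing V] [CharZero V] (A : ADF ℓ V)
    (hFfield : ∀ f, A.quasi f → f ≠ 0 → ∃ g, A.quasi g ∧ f * g = 1)
    (K : Fin (N + 1) → Matrix (Fin ℓ) (Fin ℓ) V)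
    (hKq : ∀ n i j, A.quasi (K n i j))
    (L : Matrix (Fin ℓ) (Fin ℓ) V)
    (hLq : ∀ i j, A.quasi (L i j))
    (hKL : K (Fin.last N) * L = 1) (hLK : L * K (Fin.last N) = 1) :
    ∀ Fv : Fin ℓ → V,
      (∀ i, ∑ n : Fin (N + 1), ∑ j, K n i j * A.d^[(n : ℕ)] (Fv j) = 0) →
      ∀ j, A.quasi (Fv j) := by
  classical
  intro Fv hFv
  by_contra hnq
  push_neg at hnq
  obtain ⟨jw, hjw⟩ := hnq
  rw [ADF.quasi] at hjw
  push_neg at hjw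
  obtain ⟨iw, nw, hnw⟩ := hjw
  -- bound on nonvanishing partials
  choose Mf hMf using fun j => A.finite_dep (Fv j)
  set M0 : ℕ := Finset.univ.sup Mf with hM0
  have hbound : ∀ (j : Fin ℓ) (i : Fin ℓ) (n : ℕ), M0 ≤ n → A.pd i n (Fv j) = 0 := by
    intro j i n hn
    exact hMf j i n (le_trans (Finset.le_sup (Finset.mem_univ j)) hn)
  set P : ℕ → Prop := fun m => ∃ i j, A.pd i m (Fv j) ≠ 0 with hP
  have hnwle : nw ≤ M0 := by
    by_contra h
    exact hnw (hbound jw iw nw (by omega))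
  set M : ℕ := Nat.findGreatest P M0 with hM
  have hPM : P M := Nat.findGreatest_spec hnwle ⟨iw, jw, hnw⟩
  have hvan : ∀ (j : Fin ℓ) (m : ℕ), M < m → ∀ i, A.pd i m (Fv j) = 0 := by
    intro j m hm i
    by_cases hmle : m ≤ M0
    · by_contra h
      exact Nat.findGreatest_is_greatest hm hmle ⟨i, j, h⟩
    · exact hbound j i m (by omega)
  obtain ⟨i0, j0, hj0⟩ := hPM
  -- key identity
  have key : ∀ r, ∑ t, K (Fin.last N) r t * A.pd i0 M (Fv t) = 0 := by
    intro r
    have h0 : (A.pdHom i0 (M + N)) (∑ n : Fin (N + 1), ∑ j, K n r j * A.d^[(n : ℕ)] (Fv j))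
        = 0 := by rw [hFv r]; exact map_zero _
    rw [map_sum] at h0
    simp only [map_sum] at h0
    have hterm : ∀ (n : Fin (N + 1)) (j : Fin ℓ),
        A.pdHom i0 (M + N) (K n r j * A.d^[(n : ℕ)] (Fv j))
          = if (n : ℕ) = N then K n r j * A.pd i0 M (Fv j) else 0 := by
      intro n j
      show A.pd i0 (M + N) (K n r j * A.d^[(n : ℕ)] (Fv j)) = _
      rw [A.pd_mul, hKq n r j, zero_mul, zero_add]
      by_cases hn : (n : ℕ) = N
      · rw [hn, A.pd_iter_top i0 (Fv j) M (fun m hm => hvan j m hm i0) N, if_pos rfl]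
      · rw [A.pd_iter_zero i0 (Fv j) M (fun m hm => hvan j m hm i0) (n : ℕ) (M + N)
          (by have := n.isLt; omega), mul_zero, if_neg hn]
    simp only [hterm] at h0
    rw [Fintype.sum_eq_single (Fin.last N) (by
      intro n hn
      have hne : (n : ℕ) ≠ N := by
        intro h
        exact hn (Fin.ext (by simp [h, Fin.val_last]))
      simp [hne])] at h0
    simpa [Fin.val_last] using h0
  -- contradiction via the inverse matrix
  apply hj0
  have h2 : ∑ t, (L * K (Fin.last N)) j0 t * A.pd i0 M (Fv t) = 0 := by
    calc ∑ t, (L * K (Fin.last N)) j0 t * A.pd i0 M (Fv t)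
        = ∑ t, ∑ s, L j0 s * (K (Fin.last N) s t * A.pd i0 M (Fv t)) := by
          simp [Matrix.mul_apply, Finset.sum_mul, mul_assoc]
      _ = ∑ s, L j0 s * ∑ t, K (Fin.last N) s t * A.pd i0 M (Fv t) := by
          rw [Finset.sum_comm]
          simp [Finset.mul_sum]
      _ = 0 := by simp [key]
  rw [hLK] at h2
  simpa [Matrix.one_apply] using h2
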